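/- Radial long-range ambiguity of the phase-insensitive distance: for every r > 0 and every real θ, s*(h(r, θ), h(r + c/Δf, θ)) = 1, i.e. the PI distance d*(h(r, θ), h(r + c/Δf, θ)) = √(2 − 2·s*) equals 0, even though the two locations differ by c/Δf in range. (Hence any area of radial size exceeding c/Δf cannot be weakly identifiable by the PI distance.) -/

import Mathlib

open Real

/-- Subcarrier frequencies: `f_m = f_c + (m - 1 - (N_s - 1)/2) · Δf` for `m = 1,…,N_s`,
indexed here by `m : Fin Ns` (so `(m : ℕ) = m - 1`). -/
noncomputable def subcarrier (fc Δf : ℝ) (Ns : ℕ) (m : Fin Ns) : ℝ :=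
  fc + (((m : ℕ) : ℝ) - ((Ns : ℝ) - 1) / 2) * Δf

/-- Frequency signature vector: `f(r)_m = (1/√N_s) · exp(−2πi·(r/c)·(f_m − f_c))`. -/
noncomputable def freqSig (c fc Δf : ℝ) (Ns : ℕ) (r : ℝ) (m : Fin Ns) : ℂ :=
  ((1 / Real.sqrt Ns : ℝ) : ℂ) *
    Complex.exp (((-(2 * π * (r / c) * (subcarrier fc Δf Ns m - fc)) : ℝ) : ℂ) * Complex.I)

/-- Generic 2D steering vector: `a(θ)_n = (1/√N_a) · exp(2πi·(p_n · u(θ))/λ)`, where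
`u(θ) = (cos θ, sin θ)` and `p_n ∈ ℝ²` is the `n`-th antenna position. -/
noncomputable def steer (lam : ℝ) (Na : ℕ) (p : Fin Na → ℝ × ℝ) (θ : ℝ) (n : Fin Na) : ℂ :=
  ((1 / Real.sqrt Na : ℝ) : ℂ) *
    Complex.exp (((2 * π / lam * ((p n).1 * Real.cos θ + (p n).2 * Real.sin θ) : ℝ) : ℂ)
      * Complex.I)

/-- LoS channel vector at polar coordinates `(r, θ)`:
`h(r,θ)_{(m,n)} = (√(N_aN_s)/r) · exp(−2πi·r/λ) · f(r)_m · a(θ)_n`. -/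
noncomputable def chan (c fc Δf lam : ℝ) (Ns Na : ℕ) (p : Fin Na → ℝ × ℝ)
    (r θ : ℝ) (k : Fin Ns × Fin Na) : ℂ :=
  ((Real.sqrt ((Na : ℝ) * (Ns : ℝ)) / r : ℝ) : ℂ) *
    Complex.exp (((-(2 * π * r / lam) : ℝ) : ℂ) * Complex.I) *
    freqSig c fc Δf Ns r k.1 * steer lam Na p θ k.2

/-- Radial similarity term `f̄(r_i, r_j) = |⟨f(r_i), f(r_j)⟩|`. -/
noncomputable def fbar (c fc Δf : ℝ) (Ns : ℕ) (ri rj : ℝ) : ℝ :=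
  ‖∑ m : Fin Ns, (starRingEnd ℂ) (freqSig c fc Δf Ns ri m) * freqSig c fc Δf Ns rj m‖

/-- Angular similarity term `ā(θ_i, θ_j) = |⟨a(θ_i), a(θ_j)⟩|`. -/
noncomputable def abar (lam : ℝ) (Na : ℕ) (p : Fin Na → ℝ × ℝ) (θi θj : ℝ) : ℝ :=
  ‖∑ n : Fin Na, (starRingEnd ℂ) (steer lam Na p θi n) * steer lam Na p θj n‖

/-- Phase-insensitive similarity
`s*(h₁, h₂) = |Σ_k conj((h₁)_k)·(h₂)_k| / (‖h₁‖·‖h₂‖)` (Euclidean norms). -/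
noncomputable def simPI {ι : Type*} [Fintype ι] (h1 h2 : ι → ℂ) : ℝ :=
  ‖∑ k, (starRingEnd ℂ) (h1 k) * h2 k‖ /
    (Real.sqrt (∑ k, ‖h1 k‖ ^ 2) * Real.sqrt (∑ k, ‖h2 k‖ ^ 2))

lemma freq_shift (c fc Δf : ℝ) (hc : c ≠ 0) (hΔf : Δf ≠ 0) (Ns : ℕ) (r : ℝ) (m : Fin Ns) :
    freqSig c fc Δf Ns (r + c / Δf) m
      = Complex.exp (((π * ((Ns : ℝ) - 1) : ℝ) : ℂ) * Complex.I) * freqSig c fc Δf Ns r m := by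
  unfold freqSig subcarrier
  rw [mul_left_comm]
  congr 1
  rw [← Complex.exp_add]
  have : ((-(2 * π * ((r + c / Δf) / c) * ((fc + (((m : ℕ) : ℝ) - ((Ns : ℝ) - 1) / 2) * Δf) - fc)) : ℝ) : ℂ) * Complex.I
      = ((π * ((Ns : ℝ) - 1) : ℝ) : ℂ) * Complex.I
        + ((-(2 * π * (r / c) * ((fc + (((m : ℕ) : ℝ) - ((Ns : ℝ) - 1) / 2) * Δf) - fc)) : ℝ) : ℂ) * Complex.I
        + ((-(m : ℕ) : ℤ) : ℂ) * (2 * (π : ℂ) * Complex.I) := by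
    have hc' : (c : ℂ) ≠ 0 := by exact_mod_cast hc
    have hΔf' : (Δf : ℂ) ≠ 0 := by exact_mod_cast hΔf
    push_cast
    field_simp
    ring
  rw [this, Complex.exp_add, Complex.exp_int_mul_two_pi_mul_I, mul_one]

lemma simPI_smul {ι : Type*} [Fintype ι] (h : ι → ℂ) (w : ℂ) (hw : w ≠ 0)
    (hS : 0 < ∑ k, ‖h k‖ ^ 2) : simPI h (fun k => w * h k) = 1 := by
  unfold simPI
  have e1 : ∑ k, (starRingEnd ℂ) (h k) * (w * h k)
      = w * (((∑ k, ‖h k‖ ^ 2 : ℝ) : ℂ)) := by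
    push_cast
    rw [Finset.mul_sum]
    refine Finset.sum_congr rfl fun k _ => ?_
    have : ((‖h k‖ : ℂ)) ^ 2 = (starRingEnd ℂ) (h k) * h k := by
      rw [← Complex.normSq_eq_conj_mul_self, ← Complex.sq_norm]
      push_cast; ring
    rw [this]
    ring
  have e2 : ∑ k, ‖w * h k‖ ^ 2 = ‖w‖ ^ 2 * ∑ k, ‖h k‖ ^ 2 := by
    rw [Finset.mul_sum]
    exact Finset.sum_congr rfl fun k _ => by rw [norm_mul, mul_pow]
  rw [e1, e2, norm_mul, Complex.norm_real, Real.norm_of_nonneg hS.le,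
    Real.sqrt_mul (sq_nonneg _), Real.sqrt_sq (norm_nonneg _)]
  have h1 : Real.sqrt (∑ k, ‖h k‖ ^ 2) * Real.sqrt (∑ k, ‖h k‖ ^ 2) = ∑ k, ‖h k‖ ^ 2 :=
    Real.mul_self_sqrt hS.le
  have hwa : ‖w‖ ≠ 0 := by simpa using hw
  have hsq : Real.sqrt (∑ k, ‖h k‖ ^ 2) ≠ 0 := by positivity
  have hne : Real.sqrt (∑ k, ‖h k‖ ^ 2) * (‖w‖ * Real.sqrt (∑ k, ‖h k‖ ^ 2)) ≠ 0 :=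
    mul_ne_zero hsq (mul_ne_zero hwa hsq)
  rw [div_eq_one_iff_eq hne, mul_left_comm, h1]
/-- radial long-range ambiguity of the PI distance: for every `r > 0`
and every `θ`, `s*(h(r,θ), h(r + c/Δf, θ)) = 1`, i.e. the PI distance
`d* = √(2 − 2·s*)` vanishes, although the two locations differ by `c/Δf` in range. -/
theorem radial_long_range_ambiguity (c fc Δf lam : ℝ) (hc : 0 < c) (hΔf : 0 < Δf)
    (hlam : 0 < lam) (Ns Na : ℕ) (hNs : 1 ≤ Ns) (hNa : 1 ≤ Na) (p : Fin Na → ℝ × ℝ)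
    (r θ : ℝ) (hr : 0 < r) :
    simPI (chan c fc Δf lam Ns Na p r θ) (chan c fc Δf lam Ns Na p (r + c / Δf) θ) = 1 ∧
    Real.sqrt (2 - 2 *
      simPI (chan c fc Δf lam Ns Na p r θ) (chan c fc Δf lam Ns Na p (r + c / Δf) θ)) = 0 := by
  have hr' : 0 < r + c / Δf := by positivity
  have hNs0 : (0:ℝ) < (Ns:ℝ) := by exact_mod_cast Nat.lt_of_lt_of_le Nat.zero_lt_one hNs
  have hNa0 : (0:ℝ) < (Na:ℝ) := by exact_mod_cast Nat.lt_of_lt_of_le Nat.zero_lt_one hNa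
  set w : ℂ := ((r / (r + c / Δf) : ℝ) : ℂ) *
      Complex.exp (((-(2 * π * (c / Δf) / lam) : ℝ) : ℂ) * Complex.I) *
      Complex.exp (((π * ((Ns : ℝ) - 1) : ℝ) : ℂ) * Complex.I) with hw_def
  have hw : w ≠ 0 := by
    apply mul_ne_zero (mul_ne_zero _ (Complex.exp_ne_zero _)) (Complex.exp_ne_zero _)
    rw [Complex.ofReal_ne_zero]
    positivity
  have key : chan c fc Δf lam Ns Na p (r + c / Δf) θ
      = fun k => w * chan c fc Δf lam Ns Na p r θ k := by
    funext k
    unfold chan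
    rw [freq_shift c fc Δf hc.ne' hΔf.ne']
    have e1 : (Real.sqrt ((Na:ℝ) * (Ns:ℝ)) / (r + c / Δf) : ℝ)
        = (r / (r + c / Δf)) * (Real.sqrt ((Na:ℝ) * (Ns:ℝ)) / r) := by
      field_simp
    have e2 : ((-(2 * π * (r + c / Δf) / lam) : ℝ) : ℂ) * Complex.I
        = ((-(2 * π * (c / Δf) / lam) : ℝ) : ℂ) * Complex.I
          + ((-(2 * π * r / lam) : ℝ) : ℂ) * Complex.I := by
      push_cast; ring
    rw [e1, e2, Complex.exp_add, Complex.ofReal_mul]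
    ring
  have hne : ∀ k : Fin Ns × Fin Na, chan c fc Δf lam Ns Na p r θ k ≠ 0 := by
    intro k
    unfold chan freqSig steer
    have h1 : Real.sqrt ((Na:ℝ) * (Ns:ℝ)) ≠ 0 := by positivity
    have h2 : Real.sqrt (Ns:ℝ) ≠ 0 := by positivity
    have h3 : Real.sqrt (Na:ℝ) ≠ 0 := by positivity
    apply mul_ne_zero (mul_ne_zero (mul_ne_zero _ (Complex.exp_ne_zero _)) _)
    · apply mul_ne_zero _ (Complex.exp_ne_zero _)
      rw [Complex.ofReal_ne_zero]
      positivity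
    · rw [Complex.ofReal_ne_zero]
      exact div_ne_zero h1 hr.ne'
    · apply mul_ne_zero _ (Complex.exp_ne_zero _)
      rw [Complex.ofReal_ne_zero]
      positivity
  have hS : 0 < ∑ k, ‖chan c fc Δf lam Ns Na p r θ k‖ ^ 2 := by
    apply Finset.sum_pos
    · intro k _
      exact pow_pos (norm_pos_iff.mpr (hne k)) 2
    · exact ⟨(⟨0, hNs⟩, ⟨0, hNa⟩), Finset.mem_univ _⟩
  have hsim : simPI (chan c fc Δf lam Ns Na p r θ)
      (chan c fc Δf lam Ns Na p (r + c / Δf) θ) = 1 := by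
    rw [key]
    exact simPI_smul _ w hw hS
  refine ⟨hsim, ?_⟩
  rw [hsim]
  norm_num
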